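/- (Positivity-preserving property.) If the CFL condition λ ≤ min{(8 − 27α)/(27L), 2/(27L), α/L} holds, then the MUSCL–Hancock update of any nonnegative summable sequence is nonnegative: ρ'_j ≥ 0 for every j ∈ ℤ. -/

import Mathlib

open MeasureTheory

noncomputable section

/-- minmod limiter of three arguments. -/
def minmod3 (a b c : ℝ) : ℝ :=
  if 0 < a ∧ 0 < b ∧ 0 < c then min a (min b c)
  else if a < 0 ∧ b < 0 ∧ c < 0 then max a (max b c)
  else 0

/-- MUSCL slopes `σ_j = 2θ·minmod(ρ_j − ρ_{j−1}, (ρ_{j+1} − ρ_{j−1})/2, ρ_{j+1} − ρ_j)`. -/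
def slp (θ : ℝ) (ρ : ℤ → ℝ) (j : ℤ) : ℝ :=
  2 * θ * minmod3 (ρ j - ρ (j - 1)) ((ρ (j + 1) - ρ (j - 1)) / 2) (ρ (j + 1) - ρ j)

/-- left interface value `ρ⁻_{j+1/2} = ρ_j + σ_j/2`. -/
def intL (θ : ℝ) (ρ : ℤ → ℝ) (j : ℤ) : ℝ := ρ j + slp θ ρ j / 2

/-- right interface value `ρ⁺_{j−1/2} = ρ_j − σ_j/2`. -/
def intR (θ : ℝ) (ρ : ℤ → ℝ) (j : ℤ) : ℝ := ρ j - slp θ ρ j / 2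

/-- discrete convolution `A_j = Δx·Σ_l μ((j−l)Δx)·ρ_l`. -/
def Adisc (μ : ℝ → ℝ) (Δx : ℝ) (ρ : ℤ → ℝ) (j : ℤ) : ℝ :=
  Δx * ∑' l : ℤ, μ (((j : ℝ) - (l : ℝ)) * Δx) * ρ l

/-- `s_j = θ·(A_{j+1} − A_{j−1})`. -/
def sdisc (μ : ℝ → ℝ) (θ Δx : ℝ) (ρ : ℤ → ℝ) (j : ℤ) : ℝ :=
  θ * (Adisc μ Δx ρ (j + 1) - Adisc μ Δx ρ (j - 1))

/-- `A⁻_{j+1/2} = A_j + s_j/2`. -/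
def AdiscL (μ : ℝ → ℝ) (θ Δx : ℝ) (ρ : ℤ → ℝ) (j : ℤ) : ℝ :=
  Adisc μ Δx ρ j + sdisc μ θ Δx ρ j / 2

/-- `A⁺_{j−1/2} = A_j − s_j/2`. -/
def AdiscR (μ : ℝ → ℝ) (θ Δx : ℝ) (ρ : ℤ → ℝ) (j : ℤ) : ℝ :=
  Adisc μ Δx ρ j - sdisc μ θ Δx ρ j / 2

/-- mid-time value `ρ^{½,−}_{j+1/2}`. -/
def midL (f : ℝ → ℝ → ℝ) (μ : ℝ → ℝ) (θ lam Δx : ℝ) (ρ : ℤ → ℝ) (j : ℤ) : ℝ :=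
  intL θ ρ j - lam / 2 *
    (f (intL θ ρ j) (AdiscL μ θ Δx ρ j) - f (intR θ ρ j) (AdiscR μ θ Δx ρ j))

/-- mid-time value `ρ^{½,+}_{j−1/2}`. -/
def midR (f : ℝ → ℝ → ℝ) (μ : ℝ → ℝ) (θ lam Δx : ℝ) (ρ : ℤ → ℝ) (j : ℤ) : ℝ :=
  intR θ ρ j - lam / 2 *
    (f (intL θ ρ j) (AdiscL μ θ Δx ρ j) - f (intR θ ρ j) (AdiscR μ θ Δx ρ j))

/-- mid-time convolution `A^{½}_{j+1/2}`. -/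
def Amid (f : ℝ → ℝ → ℝ) (μ : ℝ → ℝ) (θ lam Δx : ℝ) (ρ : ℤ → ℝ) (j : ℤ) : ℝ :=
  Δx / 2 * ∑' l : ℤ,
    (μ (((j : ℝ) + 1 - (l : ℝ)) * Δx) * midR f μ θ lam Δx ρ l +
     μ (((j : ℝ) - (l : ℝ)) * Δx) * midL f μ θ lam Δx ρ l)

/-- Lax–Friedrichs type numerical flux `F(u,v,A)`. -/
def numFlux (f : ℝ → ℝ → ℝ) (α lam u v A : ℝ) : ℝ :=
  (f u A + f v A) / 2 - α * (v - u) / (2 * lam)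

/-- MUSCL–Hancock update `ρ'_j`. -/
def mhUpdate (f : ℝ → ℝ → ℝ) (μ : ℝ → ℝ) (θ α lam Δx : ℝ) (ρ : ℤ → ℝ) (j : ℤ) : ℝ :=
  ρ j - lam *
    (numFlux f α lam (midL f μ θ lam Δx ρ j) (midR f μ θ lam Δx ρ (j + 1))
        (Amid f μ θ lam Δx ρ j) -
     numFlux f α lam (midL f μ θ lam Δx ρ (j - 1)) (midR f μ θ lam Δx ρ j)
        (Amid f μ θ lam Δx ρ (j - 1)))


private lemma slp_bound (θ : ℝ) (ρ : ℤ → ℝ) (hθ0 : 0 ≤ θ) (hθ1 : θ ≤ 1 / 2)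
    (hρ : ∀ j : ℤ, 0 ≤ ρ j) (j : ℤ) : |slp θ ρ j| ≤ ρ j := by
  unfold slp minmod3
  split_ifs with h1 h2
  · obtain ⟨ha, hb, hc⟩ := h1
    have hm1 : min (ρ j - ρ (j - 1)) (min ((ρ (j + 1) - ρ (j - 1)) / 2) (ρ (j + 1) - ρ j))
        ≤ ρ j - ρ (j - 1) := min_le_left _ _
    have hm2 : 0 < min (ρ j - ρ (j - 1)) (min ((ρ (j + 1) - ρ (j - 1)) / 2) (ρ (j + 1) - ρ j)) :=
      lt_min ha (lt_min hb hc)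
    rw [abs_le]
    constructor
    · nlinarith [hρ j]
    · nlinarith [hρ (j - 1)]
  · obtain ⟨ha, hb, hc⟩ := h2
    have hm1 : ρ (j + 1) - ρ j ≤
        max (ρ j - ρ (j - 1)) (max ((ρ (j + 1) - ρ (j - 1)) / 2) (ρ (j + 1) - ρ j)) :=
      le_trans (le_max_right _ _) (le_max_right _ _)
    have hm2 : max (ρ j - ρ (j - 1)) (max ((ρ (j + 1) - ρ (j - 1)) / 2) (ρ (j + 1) - ρ j)) < 0 :=
      max_lt ha (max_lt hb hc)
    rw [abs_le]
    constructor
    · nlinarith [hρ (j + 1)]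
    · nlinarith [hρ j]
  · simpa using hρ j

private lemma fbound {f : ℝ → ℝ → ℝ} {L : ℝ} (hf : ContDiff ℝ 2 (Function.uncurry f))
    (hf0 : ∀ A : ℝ, f 0 A = 0) (hL : ∀ r A : ℝ, |deriv (fun x => f x A) r| ≤ L)
    (r A : ℝ) : |f r A| ≤ L * |r| := by
  have hdiff : Differentiable ℝ (fun x => f x A) := by
    have h1 : Differentiable ℝ (Function.uncurry f) := hf.differentiable (by norm_num)
    have h2 : Differentiable ℝ (fun x : ℝ => (x, A)) :=
      differentiable_id.prodMk (differentiable_const A)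
    exact fun x => ((h1 (x, A)).comp x (h2 x) : DifferentiableAt ℝ (Function.uncurry f ∘ fun x : ℝ => (x, A)) x)
  have key := Convex.norm_image_sub_le_of_norm_deriv_le
    (f := fun x => f x A) (s := Set.univ) (C := L)
    (fun x _ => hdiff x)
    (fun x _ => by simpa using hL x A)
    convex_univ (Set.mem_univ 0) (Set.mem_univ r)
  simpa [hf0 A] using key

set_option maxHeartbeats 1000000 in
/-- positivity-preserving property of the MUSCL–Hancock update. -/
theorem stmt4 (f : ℝ → ℝ → ℝ) (μ : ℝ → ℝ) (Δx Δt lam θ α L : ℝ)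
    (hΔx : 0 < Δx) (hΔt : 0 < Δt) (hlam : lam = Δt / Δx)
    (hθ0 : 0 ≤ θ) (hθ1 : θ ≤ 1 / 2) (hα0 : 0 < α) (hα1 : α < 8 / 27)
    (hf : ContDiff ℝ 2 (Function.uncurry f)) (hf0 : ∀ A : ℝ, f 0 A = 0)
    (hL : ∀ r A : ℝ, |deriv (fun x => f x A) r| ≤ L)
    (hμ : ContDiff ℝ 2 μ) (hμc : HasCompactSupport μ)
    (hCFL : lam ≤ min ((8 - 27 * α) / (27 * L)) (min (2 / (27 * L)) (α / L)))
    (ρ : ℤ → ℝ) (hρ : ∀ j : ℤ, 0 ≤ ρ j) (hsum : Summable ρ) :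
    ∀ j : ℤ, 0 ≤ mhUpdate f μ θ α lam Δx ρ j := by
  have hlam0 : 0 < lam := by rw [hlam]; positivity
  have hL0 : 0 ≤ L := le_trans (abs_nonneg _) (hL 0 0)
  have hLpos : 0 < L := by
    rcases hL0.lt_or_eq with h | h
    · exact h
    · exfalso
      have h2 : lam ≤ α / L := le_trans hCFL (le_trans (min_le_right _ _) (min_le_right _ _))
      rw [← h, div_zero] at h2
      linarith
  have hε1 : lam * L ≤ α := by
    have h2 : lam ≤ α / L := le_trans hCFL (le_trans (min_le_right _ _) (min_le_right _ _))
    rw [le_div_iff₀ hLpos] at h2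
    linarith
  have hε2 : lam * L ≤ 2 / 27 := by
    have h2 : lam ≤ 2 / (27 * L) := le_trans hCFL (le_trans (min_le_right _ _) (min_le_left _ _))
    rw [le_div_iff₀ (by positivity)] at h2
    nlinarith
  have hε3 : lam * L ≤ (8 - 27 * α) / 27 := by
    have h2 : lam ≤ (8 - 27 * α) / (27 * L) := le_trans hCFL (min_le_left _ _)
    rw [le_div_iff₀ (by positivity)] at h2
    nlinarith
  have habs : ∀ r A : ℝ, |f r A| ≤ L * |r| := fbound hf hf0 hL
  -- facts about mid-time values
  have hmid : ∀ j : ℤ, 0 ≤ midL f μ θ lam Δx ρ j ∧ 0 ≤ midR f μ θ lam Δx ρ j ∧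
      midL f μ θ lam Δx ρ j + midR f μ θ lam Δx ρ j ≤ 2 * (1 + lam * L) * ρ j := by
    intro j
    have hs := slp_bound θ ρ hθ0 hθ1 hρ j
    rw [abs_le] at hs
    have hρj := hρ j
    have ha : ρ j / 2 ≤ intL θ ρ j := by unfold intL; linarith [hs.1]
    have hb : ρ j / 2 ≤ intR θ ρ j := by unfold intR; linarith [hs.2]
    have hab : intL θ ρ j + intR θ ρ j = 2 * ρ j := by unfold intL intR; ring
    have ha0 : 0 ≤ intL θ ρ j := by linarith
    have hb0 : 0 ≤ intR θ ρ j := by linarith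
    have hfa := habs (intL θ ρ j) (AdiscL μ θ Δx ρ j)
    have hfb := habs (intR θ ρ j) (AdiscR μ θ Δx ρ j)
    rw [abs_of_nonneg ha0, abs_le] at hfa
    rw [abs_of_nonneg hb0, abs_le] at hfb
    have hlam2 : (0:ℝ) ≤ lam / 2 := by linarith
    have hd1 : lam / 2 * (f (intL θ ρ j) (AdiscL μ θ Δx ρ j) -
        f (intR θ ρ j) (AdiscR μ θ Δx ρ j)) ≤ lam / 2 * (L * intL θ ρ j + L * intR θ ρ j) :=
      mul_le_mul_of_nonneg_left (by linarith [hfa.2, hfb.1]) hlam2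
    have hd2 : -(lam / 2 * (L * intL θ ρ j + L * intR θ ρ j)) ≤
        lam / 2 * (f (intL θ ρ j) (AdiscL μ θ Δx ρ j) -
        f (intR θ ρ j) (AdiscR μ θ Δx ρ j)) := by
      have := mul_le_mul_of_nonneg_left
        (show -(L * intL θ ρ j + L * intR θ ρ j) ≤ f (intL θ ρ j) (AdiscL μ θ Δx ρ j) -
          f (intR θ ρ j) (AdiscR μ θ Δx ρ j) by linarith [hfa.1, hfb.2]) hlam2
      linarith
    have heq : lam / 2 * (L * intL θ ρ j + L * intR θ ρ j) = lam * L * ρ j := by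
      linear_combination lam * L / 2 * hab
    rw [heq] at hd1 hd2
    have hεrho : lam * L * ρ j ≤ 2 / 27 * ρ j := mul_le_mul_of_nonneg_right hε2 hρj
    refine ⟨?_, ?_, ?_⟩
    · unfold midL; linarith
    · unfold midR; linarith
    · unfold midL midR; linarith
  intro j
  obtain ⟨hu2, -, -⟩ := hmid j
  obtain ⟨-, hv2, -⟩ := hmid (j + 1)
  obtain ⟨hu1, -, -⟩ := hmid (j - 1)
  obtain ⟨-, hv1, hS⟩ := hmid j
  set u₂ := midL f μ θ lam Δx ρ j with hu₂def
  set v₂ := midR f μ θ lam Δx ρ (j + 1) with hv₂def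
  set u₁ := midL f μ θ lam Δx ρ (j - 1) with hu₁def
  set v₁ := midR f μ θ lam Δx ρ j with hv₁def
  set A₂ := Amid f μ θ lam Δx ρ j with hA₂def
  set A₁ := Amid f μ θ lam Δx ρ (j - 1) with hA₁def
  have hne : lam ≠ 0 := ne_of_gt hlam0
  have hexp : mhUpdate f μ θ α lam Δx ρ j =
      (α / 2 * v₂ - lam / 2 * f v₂ A₂) + (α / 2 * u₁ + lam / 2 * f u₁ A₁) +
      (ρ j - α / 2 * (u₂ + v₁) - lam / 2 * f u₂ A₂ + lam / 2 * f v₁ A₁) := by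
    simp only [mhUpdate, numFlux, ← hu₂def, ← hv₂def, ← hu₁def, ← hv₁def, ← hA₂def, ← hA₁def]
    field_simp
    ring
  rw [hexp]
  have hfu₂ := habs u₂ A₂
  have hfv₂ := habs v₂ A₂
  have hfu₁ := habs u₁ A₁
  have hfv₁ := habs v₁ A₁
  rw [abs_of_nonneg hu2, abs_le] at hfu₂
  rw [abs_of_nonneg hv2, abs_le] at hfv₂
  rw [abs_of_nonneg hu1, abs_le] at hfu₁
  rw [abs_of_nonneg hv1, abs_le] at hfv₁
  have hlam2 : (0:ℝ) ≤ lam / 2 := by linarith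
  have p1 : 0 ≤ α / 2 * v₂ - lam / 2 * f v₂ A₂ := by
    have h1 : lam / 2 * f v₂ A₂ ≤ lam / 2 * (L * v₂) := mul_le_mul_of_nonneg_left hfv₂.2 hlam2
    have h2 : lam * L * v₂ ≤ α * v₂ := mul_le_mul_of_nonneg_right hε1 hv2
    linarith
  have p2 : 0 ≤ α / 2 * u₁ + lam / 2 * f u₁ A₁ := by
    have h1 : lam / 2 * -(L * u₁) ≤ lam / 2 * f u₁ A₁ := mul_le_mul_of_nonneg_left hfu₁.1 hlam2
    have h2 : lam * L * u₁ ≤ α * u₁ := mul_le_mul_of_nonneg_right hε1 hu1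
    linarith
  have p3 : 0 ≤ ρ j - α / 2 * (u₂ + v₁) - lam / 2 * f u₂ A₂ + lam / 2 * f v₁ A₁ := by
    have h1 : lam / 2 * f u₂ A₂ ≤ lam / 2 * (L * u₂) := mul_le_mul_of_nonneg_left hfu₂.2 hlam2
    have h2 : lam / 2 * -(L * v₁) ≤ lam / 2 * f v₁ A₁ := mul_le_mul_of_nonneg_left hfv₁.1 hlam2
    have he0 : 0 ≤ lam * L := by positivity
    have h8 : α + lam * L ≤ 8 / 27 := by linarith
    have hprod : (α + lam * L) * (1 + lam * L) ≤ 1 := by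
      nlinarith [mul_le_mul_of_nonneg_right h8 he0]
    have hS2 : (α + lam * L) / 2 * (u₂ + v₁) ≤ (α + lam * L) / 2 * (2 * (1 + lam * L) * ρ j) :=
      mul_le_mul_of_nonneg_left hS (by linarith)
    have hS3 : (α + lam * L) * (1 + lam * L) * ρ j ≤ 1 * ρ j :=
      mul_le_mul_of_nonneg_right hprod (hρ j)
    nlinarith [hS2, hS3, h1, h2]
  linarith
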